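/- arXiv:2505.00216 — 2 statements merged into one kernel-verified Lean document; each statement's English description precedes it below -/
import Mathlib

section
/- Let (Ω, F, P) be a probability space, let N ≥ 1, d_y ≥ 1, d_z ≥ 1, let γ_1, …, γ_N > 0, let w ∈ ℝᴺ, let c ∈ ℝ^{d_y}, and let Z¹, …, Zᴺ : Ω → ℝ^{d_y×d_z} be random matrices with E[‖Zⁱ‖_F²] < ∞ for every i. For a strategy profile β = (β¹, …, βᴺ) ∈ (ℝ^{d_z})ᴺ define the cost of player i by J_i(β) = E[‖c − Σ_{j=1}^N wʲ Zʲ βʲ‖²] + γ_i ‖βⁱ‖². Let S : Ω → ℝ^{d_y × N d_z} be the random block matrix S = [w¹ Z¹, …, wᴺ Zᴺ] and let Γ = diag(γ_1 I_{d_z}, …, γ_N I_{d_z}) ∈ ℝ^{N d_z × N d_z}. Then Γ + E[Sᵀ S] is symmetric positive definite (hence invertible), and the game (J_1, …, J_N) admits exactly one Nash equilibrium β*; moreover the vertical stack of β*¹, …, β*ᴺ in ℝ^{N d_z} equals (Γ + E[Sᵀ S])⁻¹ E[S]ᵀ c. -/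
open MeasureTheory Matrix

lemma dot_symm_aux {n : Type*} [Fintype n] {A : Matrix n n ℝ} (hA : Aᵀ = A)
    (u v : n → ℝ) : u ⬝ᵥ A *ᵥ v = v ⬝ᵥ A *ᵥ u := by
  rw [Matrix.dotProduct_mulVec, dotProduct_comm, ← Matrix.vecMul_transpose, hA]

lemma quad_min {n : Type*} [Fintype n] (A : Matrix n n ℝ) (hA : A.PosDef)
    (l : n → ℝ) (b₀ : n → ℝ) :
    (∀ b, b₀ ⬝ᵥ A *ᵥ b₀ - 2 * (b₀ ⬝ᵥ l) ≤ b ⬝ᵥ A *ᵥ b - 2 * (b ⬝ᵥ l)) ↔ A *ᵥ b₀ = l := by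
  have hAT : Aᵀ = A := by
    ext i j
    have h := congrFun (congrFun hA.1 j) i
    simpa [Matrix.conjTranspose_apply] using h.symm
  have key : ∀ d : n → ℝ, (b₀ + d) ⬝ᵥ A *ᵥ (b₀ + d) - 2 * ((b₀ + d) ⬝ᵥ l)
      = (b₀ ⬝ᵥ A *ᵥ b₀ - 2 * (b₀ ⬝ᵥ l)) + d ⬝ᵥ A *ᵥ d + 2 * (d ⬝ᵥ (A *ᵥ b₀ - l)) := by
    intro d
    have hsy : b₀ ⬝ᵥ A *ᵥ d = d ⬝ᵥ A *ᵥ b₀ := dot_symm_aux hAT b₀ d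
    simp only [Matrix.mulVec_add, dotProduct_add, add_dotProduct,
      dotProduct_sub]
    ring_nf
    rw [hsy]; ring
  have hpos : ∀ y : n → ℝ, y ≠ 0 → 0 < y ⬝ᵥ A *ᵥ y := by
    intro y hy
    have := hA.dotProduct_mulVec_pos hy
    simpa using this
  constructor
  · intro h
    by_contra hne
    set v : n → ℝ := A *ᵥ b₀ - l with hv
    have hvne : v ≠ 0 := sub_ne_zero.mpr hne
    have hr : 0 < v ⬝ᵥ A *ᵥ v := hpos v hvne
    have hvv : 0 < v ⬝ᵥ v := by
      have hd : v ⬝ᵥ v = ∑ i, v i ^ 2 := by simp [dotProduct, sq]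
      rw [hd]
      obtain ⟨i, hi⟩ := Function.ne_iff.mp hvne
      exact Finset.sum_pos' (fun j _ => sq_nonneg _)
        ⟨i, Finset.mem_univ i, lt_of_le_of_ne (sq_nonneg _) (Ne.symm (pow_ne_zero 2 hi))⟩
    set t : ℝ := -(v ⬝ᵥ v) / (v ⬝ᵥ A *ᵥ v) with ht
    have h1 := h (b₀ + t • v)
    rw [key (t • v)] at h1
    have h2 : (t • v) ⬝ᵥ A *ᵥ (t • v) = t ^ 2 * (v ⬝ᵥ A *ᵥ v) := by
      simp only [smul_dotProduct, Matrix.mulVec_smul, dotProduct_smul,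
        smul_eq_mul]
      ring
    have h3 : (t • v) ⬝ᵥ v = t * (v ⬝ᵥ v) := by
      simp [smul_dotProduct, smul_eq_mul]
    rw [h2, h3] at h1
    have htr : t * (v ⬝ᵥ A *ᵥ v) = -(v ⬝ᵥ v) := by
      rw [ht]; field_simp
    have h4 : 0 ≤ t ^ 2 * (v ⬝ᵥ A *ᵥ v) + 2 * (t * (v ⬝ᵥ v)) := by linarith
    have h5 : t ^ 2 * (v ⬝ᵥ A *ᵥ v) = t * -(v ⬝ᵥ v) := by
      rw [sq, mul_assoc, htr]
    have ht0 : t < 0 := div_neg_of_neg_of_pos (neg_lt_zero.mpr hvv) hr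
    nlinarith
  · intro heq b
    have hk := key (b - b₀)
    rw [heq, sub_self, dotProduct_zero, add_sub_cancel] at hk
    rw [hk]
    have hb : b₀ ⬝ᵥ A *ᵥ b₀ = b₀ ⬝ᵥ l := by rw [heq]
    have hd : 0 ≤ (b - b₀) ⬝ᵥ A *ᵥ (b - b₀) := by
      rcases eq_or_ne (b - b₀) 0 with h | h
      · simp [h]
      · exact (hpos _ h).le
    linarith

lemma expand_integral {Ω : Type*} [MeasurableSpace Ω] (P : Measure Ω) [IsProbabilityMeasure P]
    {dy : ℕ} {ι : Type*} [Fintype ι]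
    (s : Ω → Matrix (Fin dy) ι ℝ)
    (hprod : ∀ k ip jq, Integrable (fun ω => s ω k ip * s ω k jq) P)
    (hent : ∀ k ip, Integrable (fun ω => s ω k ip) P)
    (c' : Fin dy → ℝ) (x : ι → ℝ) :
    ∫ ω, ∑ k, (c' k - ∑ ip, s ω k ip * x ip) ^ 2 ∂P
    = (∑ k, c' k ^ 2) - 2 * (∑ ip, x ip * ∫ ω, ∑ k, s ω k ip * c' k ∂P)
      + ∑ ip, ∑ jq, x ip * x jq * (∫ ω, ∑ k, s ω k ip * s ω k jq ∂P) := by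
  have point : ∀ (t : Matrix (Fin dy) ι ℝ),
      ∑ k, (c' k - ∑ ip, t k ip * x ip) ^ 2
      = (∑ k, c' k ^ 2) - 2 * (∑ ip, x ip * ∑ k, t k ip * c' k)
        + ∑ ip, ∑ jq, x ip * x jq * ∑ k, t k ip * t k jq := by
    intro t
    have hk : ∀ k, (c' k - ∑ ip, t k ip * x ip) ^ 2
        = c' k ^ 2 - 2 * (∑ ip, x ip * (t k ip * c' k))
          + ∑ ip, ∑ jq, x ip * x jq * (t k ip * t k jq) := by
      intro k
      have h1 : (∑ ip, t k ip * x ip) ^ 2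
          = ∑ ip, ∑ jq, x ip * x jq * (t k ip * t k jq) := by
        rw [sq, Finset.sum_mul_sum]
        exact Finset.sum_congr rfl fun ip _ => Finset.sum_congr rfl fun jq _ => by ring
      have h2 : c' k * (∑ ip, t k ip * x ip) = ∑ ip, x ip * (t k ip * c' k) := by
        rw [Finset.mul_sum]
        exact Finset.sum_congr rfl fun ip _ => by ring
      rw [sub_sq, h1, mul_assoc, h2]
    rw [Finset.sum_congr rfl fun k _ => hk k]
    rw [Finset.sum_add_distrib, Finset.sum_sub_distrib]
    congr 1
    · congr 1
      rw [← Finset.mul_sum, Finset.sum_comm]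
      congr 1
      exact Finset.sum_congr rfl fun ip _ => (Finset.mul_sum _ _ _).symm
    · rw [Finset.sum_comm]
      refine Finset.sum_congr rfl fun ip _ => ?_
      rw [Finset.sum_comm]
      refine Finset.sum_congr rfl fun jq _ => ?_
      exact (Finset.mul_sum _ _ _).symm
  have hg : Integrable (fun ω => ∑ ip, x ip * ∑ k, s ω k ip * c' k) P :=
    integrable_finset_sum _ fun ip _ =>
      (integrable_finset_sum _ fun k _ => (hent k ip).mul_const (c' k)).const_mul (x ip)
  have hh : Integrable (fun ω => ∑ ip, ∑ jq, x ip * x jq * ∑ k, s ω k ip * s ω k jq) P :=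
    integrable_finset_sum _ fun ip _ => integrable_finset_sum _ fun jq _ =>
      (integrable_finset_sum _ fun k _ => hprod k ip jq).const_mul _
  calc ∫ ω, ∑ k, (c' k - ∑ ip, s ω k ip * x ip) ^ 2 ∂P
      = ∫ ω, ((∑ k, c' k ^ 2) - 2 * (∑ ip, x ip * ∑ k, s ω k ip * c' k)
          + ∑ ip, ∑ jq, x ip * x jq * ∑ k, s ω k ip * s ω k jq) ∂P := by
        exact integral_congr_ae (Filter.Eventually.of_forall fun ω => point (s ω))
    _ = (∑ k, c' k ^ 2) - 2 * (∑ ip, x ip * ∫ ω, ∑ k, s ω k ip * c' k ∂P)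
        + ∑ ip, ∑ jq, x ip * x jq * (∫ ω, ∑ k, s ω k ip * s ω k jq ∂P) := by
        have e1 : ∫ ω, ((∑ k, c' k ^ 2) - 2 * (∑ ip, x ip * ∑ k, s ω k ip * c' k)
            + ∑ ip, ∑ jq, x ip * x jq * ∑ k, s ω k ip * s ω k jq) ∂P
            = (∫ ω, ((∑ k, c' k ^ 2) - 2 * (∑ ip, x ip * ∑ k, s ω k ip * c' k)) ∂P)
              + ∫ ω, (∑ ip, ∑ jq, x ip * x jq * ∑ k, s ω k ip * s ω k jq) ∂P :=
          integral_add ((integrable_const _).sub (hg.const_mul 2)) hh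
        have e2 : ∫ ω, ((∑ k, c' k ^ 2) - 2 * (∑ ip, x ip * ∑ k, s ω k ip * c' k)) ∂P
            = (∫ _ω, (∑ k, c' k ^ 2) ∂P)
              - ∫ ω, (2 * (∑ ip, x ip * ∑ k, s ω k ip * c' k)) ∂P :=
          integral_sub (integrable_const _) (hg.const_mul 2)
        rw [e1, e2, integral_const, integral_const_mul]
        simp only [measure_univ, probReal_univ, ENNReal.toReal_one, one_smul]
        congr 1
        · congr 1
          rw [integral_finset_sum _ fun ip _ => (integrable_finset_sum _ fun k _ =>
            (hent k ip).mul_const (c' k)).const_mul (x ip)]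
          congr 1
          refine Finset.sum_congr rfl fun ip _ => ?_
          exact integral_const_mul _ _
        · rw [integral_finset_sum _ fun ip _ => integrable_finset_sum _ fun jq _ =>
            (integrable_finset_sum _ fun k _ => hprod k ip jq).const_mul _]
          refine Finset.sum_congr rfl fun ip _ => ?_
          rw [integral_finset_sum _ fun jq _ =>
            (integrable_finset_sum _ fun k _ => hprod k ip jq).const_mul _]
          refine Finset.sum_congr rfl fun jq _ => ?_
          exact integral_const_mul _ _

open MeasureTheory Matrix

/-- **The static quadratic Nash game among `N` proprietary agents has a unique Nash
equilibrium in closed form.**  Player `i`'s cost is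
`J_i(β) = E[‖c − Σ_j wʲ Zʲ βʲ‖²] + γ_i ‖βⁱ‖²`.  With
`S = [w¹Z¹, …, wᴺZᴺ]` and `Γ = diag(γ_1 I, …, γ_N I)`, the matrix `Γ + E[SᵀS]` is
symmetric positive definite (hence invertible), there is exactly one Nash
equilibrium `β*`, and the stack of its blocks equals `(Γ + E[SᵀS])⁻¹ E[S]ᵀ c`. -/
theorem static_quadratic_nash_unique
    {Ω : Type*} [MeasurableSpace Ω] (P : Measure Ω) [IsProbabilityMeasure P]
    (N dy dz : ℕ) (hN : 1 ≤ N) (hdy : 1 ≤ dy) (hdz : 1 ≤ dz)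
    (γ : Fin N → ℝ) (hγ : ∀ i, 0 < γ i)
    (w : Fin N → ℝ) (c : Fin dy → ℝ)
    (Z : Fin N → Ω → Matrix (Fin dy) (Fin dz) ℝ)
    (hZmeas : ∀ i k p, Measurable fun ω => Z i ω k p)
    (hZint : ∀ i, Integrable (fun ω => ∑ k, ∑ p, (Z i ω k p) ^ 2) P)
    (J : (Fin N → Fin dz → ℝ) → Fin N → ℝ)
    (hJ : ∀ β i, J β i =
      (∫ ω, ∑ k, (c k - ∑ j, w j * ((Z j ω) *ᵥ (β j)) k) ^ 2 ∂P) +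
        γ i * ∑ p, (β i p) ^ 2)
    (M : Matrix (Fin N × Fin dz) (Fin N × Fin dz) ℝ)
    (hM : M = Matrix.diagonal (fun ip => γ ip.1) +
      Matrix.of (fun ip jq =>
        ∫ ω, ∑ k, (w ip.1 * Z ip.1 ω k ip.2) * (w jq.1 * Z jq.1 ω k jq.2) ∂P))
    (ESt : Matrix (Fin N × Fin dz) (Fin dy) ℝ)
    (hESt : ESt = Matrix.of (fun ip k => ∫ ω, w ip.1 * Z ip.1 ω k ip.2 ∂P)) :
    M.PosDef ∧
    (∃! β : Fin N → Fin dz → ℝ,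
      ∀ i, ∀ b : Fin dz → ℝ, J β i ≤ J (Function.update β i b) i) ∧
    (∀ β : Fin N → Fin dz → ℝ,
      (∀ i, ∀ b : Fin dz → ℝ, J β i ≤ J (Function.update β i b) i) →
      (fun ip : Fin N × Fin dz => β ip.1 ip.2) = M⁻¹ *ᵥ (ESt *ᵥ c)) := by
  -- the random block matrix S
  set s : Ω → Matrix (Fin dy) (Fin N × Fin dz) ℝ :=
    fun ω => Matrix.of fun k ip => w ip.1 * Z ip.1 ω k ip.2 with hs
  -- integrability facts
  have hsq : ∀ i k p, Integrable (fun ω => (Z i ω k p) ^ 2) P := by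
    intro i k p
    refine (hZint i).mono' ((hZmeas i k p).pow_const 2).aestronglyMeasurable
      (Filter.Eventually.of_forall fun ω => ?_)
    rw [Real.norm_eq_abs, abs_of_nonneg (sq_nonneg _)]
    calc Z i ω k p ^ 2 ≤ ∑ p', Z i ω k p' ^ 2 :=
          Finset.single_le_sum (f := fun p' => Z i ω k p' ^ 2)
            (fun _ _ => sq_nonneg _) (Finset.mem_univ p)
      _ ≤ ∑ k', ∑ p', Z i ω k' p' ^ 2 :=
          Finset.single_le_sum (f := fun k' => ∑ p', Z i ω k' p' ^ 2)
            (fun k' _ => Finset.sum_nonneg fun _ _ => sq_nonneg _) (Finset.mem_univ k)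
  have hprodZ : ∀ i k p j q, Integrable (fun ω => Z i ω k p * Z j ω k q) P := by
    intro i k p j q
    refine ((hsq i k p).add (hsq j k q)).mono'
      ((hZmeas i k p).mul (hZmeas j k q)).aestronglyMeasurable
      (Filter.Eventually.of_forall fun ω => ?_)
    rw [Real.norm_eq_abs, abs_mul]
    simp only [Pi.add_apply]
    nlinarith [abs_nonneg (Z i ω k p), abs_nonneg (Z j ω k q), sq_abs (Z i ω k p),
      sq_abs (Z j ω k q), sq_nonneg (|Z i ω k p| - |Z j ω k q|)]
  have hentZ : ∀ i k p, Integrable (fun ω => Z i ω k p) P := by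
    intro i k p
    refine ((integrable_const (1 : ℝ)).add (hsq i k p)).mono'
      (hZmeas i k p).aestronglyMeasurable (Filter.Eventually.of_forall fun ω => ?_)
    rw [Real.norm_eq_abs]
    simp only [Pi.add_apply]
    nlinarith [sq_abs (Z i ω k p), sq_nonneg (|Z i ω k p| - 1), abs_nonneg (Z i ω k p)]
  have hprod : ∀ (k : Fin dy) (ip jq : Fin N × Fin dz),
      Integrable (fun ω => s ω k ip * s ω k jq) P := by
    intro k ip jq
    have h : (fun ω => s ω k ip * s ω k jq)
        = fun ω => (w ip.1 * w jq.1) * (Z ip.1 ω k ip.2 * Z jq.1 ω k jq.2) :=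
      funext fun ω => by simp only [hs, Matrix.of_apply]; ring
    rw [h]
    exact (hprodZ ip.1 k ip.2 jq.1 jq.2).const_mul _
  have hent : ∀ (k : Fin dy) (ip : Fin N × Fin dz), Integrable (fun ω => s ω k ip) P :=
    fun k ip => (hentZ ip.1 k ip.2).const_mul (w ip.1)
  -- the Gram matrix
  set M₀ : Matrix (Fin N × Fin dz) (Fin N × Fin dz) ℝ :=
    Matrix.of (fun ip jq => ∫ ω, ∑ k, s ω k ip * s ω k jq ∂P) with hM₀
  have hM' : M = Matrix.diagonal (fun ip => γ ip.1) + M₀ := hM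
  have hsymm : M₀ᵀ = M₀ := by
    ext ip jq
    simp only [Matrix.transpose_apply, hM₀, Matrix.of_apply]
    congr 1
    funext ω
    exact Finset.sum_congr rfl fun k _ => mul_comm _ _
  have hdot : ∀ u v : Fin N × Fin dz → ℝ,
      u ⬝ᵥ M₀ *ᵥ v = ∑ ip, ∑ jq, u ip * v jq * M₀ ip jq := by
    intro u v
    simp only [dotProduct, Matrix.mulVec, Finset.mul_sum]
    exact Finset.sum_congr rfl fun ip _ => Finset.sum_congr rfl fun jq _ => by ring
  have hm0 : ∀ x : Fin N × Fin dz → ℝ,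
      x ⬝ᵥ M₀ *ᵥ x = ∫ ω, ∑ k, (∑ ip, s ω k ip * x ip) ^ 2 ∂P := by
    intro x
    have e := expand_integral P s hprod hent (fun _ => 0) x
    simp only [mul_zero, Finset.sum_const_zero, integral_zero, zero_sub, neg_sq,
      zero_pow, OfNat.ofNat_ne_zero, ne_eq, not_false_iff, mul_zero, sub_zero,
      zero_add, zero_mul] at e
    rw [hdot]
    exact e.symm
  have hpsd : ∀ x : Fin N × Fin dz → ℝ, 0 ≤ x ⬝ᵥ M₀ *ᵥ x := by
    intro x
    rw [hm0 x]
    exact integral_nonneg fun ω => Finset.sum_nonneg fun k _ => sq_nonneg _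
  -- positive definiteness of M
  have hMpos : M.PosDef := by
    rw [Matrix.posDef_iff_dotProduct_mulVec]
    constructor
    · show Mᴴ = M
      rw [hM']
      ext ip jq
      simp only [Matrix.conjTranspose_apply, Matrix.add_apply, star_trivial,
        Matrix.diagonal_apply]
      rw [← Matrix.transpose_apply M₀ ip jq, hsymm]
      by_cases h : ip = jq
      · subst h; simp
      · rw [if_neg h, if_neg (Ne.symm h)]
    · intro x hx
      have hst : star x = x := by funext ip; simp
      rw [hst, hM', Matrix.add_mulVec, dotProduct_add]
      have h1 : x ⬝ᵥ (Matrix.diagonal fun ip => γ ip.1) *ᵥ x = ∑ ip, γ ip.1 * x ip ^ 2 := by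
        simp only [dotProduct, Matrix.mulVec_diagonal]
        exact Finset.sum_congr rfl fun ip _ => by ring
      have h2 : 0 < ∑ ip, γ ip.1 * x ip ^ 2 := by
        obtain ⟨ip, hip⟩ := Function.ne_iff.mp hx
        refine Finset.sum_pos' (fun jq _ => mul_nonneg (hγ jq.1).le (sq_nonneg _))
          ⟨ip, Finset.mem_univ ip, mul_pos (hγ ip.1)
            (lt_of_le_of_ne (sq_nonneg _) (Ne.symm (pow_ne_zero 2 hip)))⟩
      have := hpsd x
      rw [h1]
      linarith
  -- the linear term
  have hLint : ∀ ip : Fin N × Fin dz, (ESt *ᵥ c) ip = ∫ ω, ∑ k, s ω k ip * c k ∂P := by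
    intro ip
    rw [integral_finset_sum _ fun k _ => (hent k ip).mul_const (c k)]
    rw [hESt]
    simp only [Matrix.mulVec, dotProduct, Matrix.of_apply]
    exact Finset.sum_congr rfl fun k _ => (integral_mul_const _ _).symm
  -- rewrite `J` through the Gram matrix
  have hJQ : ∀ (β : Fin N → Fin dz → ℝ) (i : Fin N), J β i =
      ((∑ k, c k ^ 2) - 2 * ((fun ip : Fin N × Fin dz => β ip.1 ip.2) ⬝ᵥ (ESt *ᵥ c))
        + (fun ip : Fin N × Fin dz => β ip.1 ip.2) ⬝ᵥ
            M₀ *ᵥ (fun ip : Fin N × Fin dz => β ip.1 ip.2))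
        + γ i * ∑ p, β i p ^ 2 := by
    intro β i
    rw [hJ]
    congr 1
    have hin : ∀ ω (k : Fin dy), (∑ j, w j * ((Z j ω) *ᵥ (β j)) k)
        = ∑ ip : Fin N × Fin dz, s ω k ip * β ip.1 ip.2 := by
      intro ω k
      rw [Fintype.sum_prod_type]
      refine Finset.sum_congr rfl fun j _ => ?_
      simp only [Matrix.mulVec, dotProduct, hs, Matrix.of_apply, Finset.mul_sum]
      exact Finset.sum_congr rfl fun p _ => by ring
    have h1 : ∫ ω, ∑ k, (c k - ∑ j, w j * ((Z j ω) *ᵥ (β j)) k) ^ 2 ∂P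
        = ∫ ω, ∑ k, (c k - ∑ ip : Fin N × Fin dz, s ω k ip * β ip.1 ip.2) ^ 2 ∂P := by
      congr 1
      funext ω
      exact Finset.sum_congr rfl fun k _ => by rw [hin ω k]
    rw [h1, expand_integral P s hprod hent c (fun ip => β ip.1 ip.2)]
    congr 1
    · congr 1
      congr 1
      simp only [dotProduct]
      exact Finset.sum_congr rfl fun ip _ => by rw [hLint ip]
    · rw [hdot]
      rfl
  -- per player analysis
  have hplayer : ∀ (β : Fin N → Fin dz → ℝ) (i : Fin N),
      (∀ b : Fin dz → ℝ, J β i ≤ J (Function.update β i b) i) ↔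
        (∀ p, (M *ᵥ fun ip : Fin N × Fin dz => β ip.1 ip.2) (i, p) = (ESt *ᵥ c) (i, p)) := by
    intro β i
    set x : Fin N × Fin dz → ℝ := fun ip => β ip.1 ip.2 with hxdef
    set x₀ : Fin N × Fin dz → ℝ := fun jq => if jq.1 = i then 0 else β jq.1 jq.2 with hx₀
    set E : Matrix (Fin N × Fin dz) (Fin dz) ℝ :=
      Matrix.of fun jq p => if jq = (i, p) then 1 else 0 with hEdef
    have hE : ∀ b : Fin dz → ℝ, E *ᵥ b = fun jq => if jq.1 = i then b jq.2 else 0 := by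
      intro b
      funext jq
      obtain ⟨j, q⟩ := jq
      simp only [Matrix.mulVec, dotProduct, hEdef, Matrix.of_apply, Prod.mk.injEq]
      by_cases hj : j = i
      · subst hj
        simp [Finset.sum_ite_eq' Finset.univ q b]
      · simp [hj]
    have hEt : ∀ y : Fin N × Fin dz → ℝ, Eᵀ *ᵥ y = fun p => y (i, p) := by
      intro y
      funext p
      simp only [Matrix.mulVec, dotProduct, Matrix.transpose_apply, hEdef,
        Matrix.of_apply]
      rw [Finset.sum_eq_single (i, p)]
      · simp
      · intro jq _ hne; simp [hne]
      · intro h; exact absurd (Finset.mem_univ _) h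
    have huE : ∀ (b : Fin dz → ℝ) (y : Fin N × Fin dz → ℝ),
        (E *ᵥ b) ⬝ᵥ y = b ⬝ᵥ (Eᵀ *ᵥ y) := by
      intro b y
      rw [Matrix.dotProduct_mulVec, Matrix.vecMul_transpose]
    have hxb : ∀ b : Fin dz → ℝ,
        (fun ip : Fin N × Fin dz => Function.update β i b ip.1 ip.2) = x₀ + E *ᵥ b := by
      intro b
      funext jq
      rw [hE b]
      simp only [Pi.add_apply, hx₀, Function.update_apply]
      by_cases hj : jq.1 = i
      · simp [hj]
      · simp [hj]
    set A : Matrix (Fin dz) (Fin dz) ℝ := γ i • (1 : Matrix (Fin dz) (Fin dz) ℝ)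
      + Eᵀ * M₀ * E with hAdef
    set l : Fin dz → ℝ := Eᵀ *ᵥ ((ESt *ᵥ c) - M₀ *ᵥ x₀) with hldef
    -- A is positive definite
    have hquadA : ∀ b : Fin dz → ℝ,
        b ⬝ᵥ A *ᵥ b = γ i * (b ⬝ᵥ b) + (E *ᵥ b) ⬝ᵥ M₀ *ᵥ (E *ᵥ b) := by
      intro b
      rw [hAdef, Matrix.add_mulVec, dotProduct_add, Matrix.smul_mulVec,
        Matrix.one_mulVec, dotProduct_smul, smul_eq_mul]
      congr 1
      rw [← Matrix.mulVec_mulVec, ← Matrix.mulVec_mulVec, huE]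
    have hApos : A.PosDef := by
      rw [Matrix.posDef_iff_dotProduct_mulVec]
      constructor
      · show Aᴴ = A
        have hT : Aᵀ = A := by
          rw [hAdef, Matrix.transpose_add, Matrix.transpose_smul, Matrix.transpose_one,
            Matrix.transpose_mul, Matrix.transpose_mul, Matrix.transpose_transpose,
            hsymm, Matrix.mul_assoc]
        ext p q
        rw [Matrix.conjTranspose_apply, star_trivial, ← Matrix.transpose_apply A q p, hT]
      · intro b hb
        have hst : star b = b := by funext p; simp
        rw [hst, hquadA b]
        have h1 : 0 < b ⬝ᵥ b := by
          have hd2 : b ⬝ᵥ b = ∑ p, b p ^ 2 := by simp [dotProduct, sq]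
          rw [hd2]
          obtain ⟨p, hp⟩ := Function.ne_iff.mp hb
          exact Finset.sum_pos' (fun q _ => sq_nonneg _)
            ⟨p, Finset.mem_univ p, lt_of_le_of_ne (sq_nonneg _)
              (Ne.symm (pow_ne_zero 2 hp))⟩
        have h2 := hpsd (E *ᵥ b)
        have := hγ i
        nlinarith
    -- the cost of player i as a quadratic function of its own strategy
    have hφ : ∀ b : Fin dz → ℝ, J (Function.update β i b) i
        = (b ⬝ᵥ A *ᵥ b - 2 * (b ⬝ᵥ l))
          + ((∑ k, c k ^ 2) - 2 * (x₀ ⬝ᵥ (ESt *ᵥ c)) + x₀ ⬝ᵥ M₀ *ᵥ x₀) := by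
      intro b
      rw [hJQ (Function.update β i b) i, hxb b, Function.update_self]
      have e1 : (x₀ + E *ᵥ b) ⬝ᵥ (ESt *ᵥ c) = x₀ ⬝ᵥ (ESt *ᵥ c) + b ⬝ᵥ (Eᵀ *ᵥ (ESt *ᵥ c)) := by
        rw [add_dotProduct, huE]
      have e2 : (x₀ + E *ᵥ b) ⬝ᵥ M₀ *ᵥ (x₀ + E *ᵥ b)
          = x₀ ⬝ᵥ M₀ *ᵥ x₀ + 2 * (b ⬝ᵥ (Eᵀ *ᵥ (M₀ *ᵥ x₀))) + (E *ᵥ b) ⬝ᵥ M₀ *ᵥ (E *ᵥ b) := by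
        rw [Matrix.mulVec_add, dotProduct_add, add_dotProduct,
          add_dotProduct]
        have c1 : x₀ ⬝ᵥ M₀ *ᵥ (E *ᵥ b) = (E *ᵥ b) ⬝ᵥ M₀ *ᵥ x₀ := dot_symm_aux hsymm _ _
        have c2 : (E *ᵥ b) ⬝ᵥ (M₀ *ᵥ x₀) = b ⬝ᵥ (Eᵀ *ᵥ (M₀ *ᵥ x₀)) := huE _ _
        rw [c1, c2]
        ring
      have e3 : γ i * ∑ p, b p ^ 2 = γ i * (b ⬝ᵥ b) := by
        congr 1
        simp [dotProduct, sq]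
      have e4 : b ⬝ᵥ l = b ⬝ᵥ (Eᵀ *ᵥ (ESt *ᵥ c)) - b ⬝ᵥ (Eᵀ *ᵥ (M₀ *ᵥ x₀)) := by
        rw [hldef, Matrix.mulVec_sub, dotProduct_sub]
      rw [e1, e2, e3, e4, hquadA b]
      ring
    -- the Nash condition for player i
    have hmin : (∀ b : Fin dz → ℝ, J β i ≤ J (Function.update β i b) i) ↔ A *ᵥ β i = l := by
      rw [← quad_min A hApos l (β i)]
      have h0 : J β i = (β i ⬝ᵥ A *ᵥ β i - 2 * (β i ⬝ᵥ l))
          + ((∑ k, c k ^ 2) - 2 * (x₀ ⬝ᵥ (ESt *ᵥ c)) + x₀ ⬝ᵥ M₀ *ᵥ x₀) := by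
        conv_lhs => rw [← Function.update_eq_self i β]
        exact hφ (β i)
      constructor
      · intro h b
        have := h b
        rw [h0, hφ b] at this
        linarith
      · intro h b
        rw [h0, hφ b]
        linarith [h b]
    rw [hmin]
    -- identify the optimality condition with the rows of `M x = ESt c`
    have hxsplit : x = x₀ + E *ᵥ (β i) := by
      have := hxb (β i)
      rwa [Function.update_eq_self i β] at this
    have hAv : A *ᵥ β i - l
        = (γ i • β i + Eᵀ *ᵥ (M₀ *ᵥ x)) - Eᵀ *ᵥ (ESt *ᵥ c) := by
      have hMx : M₀ *ᵥ x = M₀ *ᵥ x₀ + M₀ *ᵥ (E *ᵥ β i) := by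
        rw [hxsplit, Matrix.mulVec_add]
      rw [hAdef, hldef, Matrix.add_mulVec, Matrix.smul_mulVec, Matrix.one_mulVec,
        hMx, Matrix.mulVec_sub, ← Matrix.mulVec_mulVec, ← Matrix.mulVec_mulVec,
        Matrix.mulVec_add]
      abel
    constructor
    · intro h p
      have h' : A *ᵥ β i - l = 0 := by rw [h]; simp
      rw [hAv] at h'
      have h2 := congrFun h' p
      simp only [Pi.sub_apply, Pi.add_apply, Pi.smul_apply, smul_eq_mul, hEt,
        Pi.zero_apply] at h2
      have h3 : (M *ᵥ x) (i, p) = γ i * β i p + (M₀ *ᵥ x) (i, p) := by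
        rw [hM', Matrix.add_mulVec, Pi.add_apply, Matrix.mulVec_diagonal]
      rw [h3]
      rw [sub_eq_zero] at h2
      exact h2
    · intro h
      have h' : A *ᵥ β i - l = 0 := by
        rw [hAv]
        funext p
        simp only [Pi.sub_apply, Pi.add_apply, Pi.smul_apply, smul_eq_mul, hEt,
          Pi.zero_apply]
        rw [sub_eq_zero]
        have h3 : (M *ᵥ x) (i, p) = γ i * β i p + (M₀ *ᵥ x) (i, p) := by
          rw [hM', Matrix.add_mulVec, Pi.add_apply, Matrix.mulVec_diagonal]
        rw [← h3]
        exact h p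
      have := sub_eq_zero.mp h'
      exact this
  -- the global characterisation
  have hchar : ∀ β : Fin N → Fin dz → ℝ,
      (∀ i, ∀ b : Fin dz → ℝ, J β i ≤ J (Function.update β i b) i) ↔
        M *ᵥ (fun ip : Fin N × Fin dz => β ip.1 ip.2) = ESt *ᵥ c := by
    intro β
    constructor
    · intro h
      funext ip
      obtain ⟨i, p⟩ := ip
      exact (hplayer β i).mp (h i) p
    · intro h i
      exact (hplayer β i).mpr fun p => congrFun h (i, p)
  -- invertibility
  have hdet : IsUnit M.det := hMpos.det_pos.ne'.isUnit
  have hinv1 : M * M⁻¹ = 1 := Matrix.mul_nonsing_inv M hdet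
  have hinv2 : M⁻¹ * M = 1 := Matrix.nonsing_inv_mul M hdet
  have hsolve : ∀ β : Fin N → Fin dz → ℝ,
      M *ᵥ (fun ip : Fin N × Fin dz => β ip.1 ip.2) = ESt *ᵥ c →
      (fun ip : Fin N × Fin dz => β ip.1 ip.2) = M⁻¹ *ᵥ (ESt *ᵥ c) := by
    intro β h
    calc (fun ip : Fin N × Fin dz => β ip.1 ip.2)
        = (1 : Matrix (Fin N × Fin dz) (Fin N × Fin dz) ℝ) *ᵥ
            (fun ip : Fin N × Fin dz => β ip.1 ip.2) := (Matrix.one_mulVec _).symm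
      _ = M⁻¹ *ᵥ (M *ᵥ (fun ip : Fin N × Fin dz => β ip.1 ip.2)) := by
          rw [Matrix.mulVec_mulVec, hinv2]
      _ = M⁻¹ *ᵥ (ESt *ᵥ c) := by rw [h]
  refine ⟨hMpos, ⟨fun i p => (M⁻¹ *ᵥ (ESt *ᵥ c)) (i, p), ?_, ?_⟩, ?_⟩
  · apply (hchar _).mpr
    have hstack : (fun ip : Fin N × Fin dz =>
        (fun i p => (M⁻¹ *ᵥ (ESt *ᵥ c)) (i, p)) ip.1 ip.2) = M⁻¹ *ᵥ (ESt *ᵥ c) := by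
      funext ip; rfl
    rw [hstack, Matrix.mulVec_mulVec, hinv1, Matrix.one_mulVec]
  · intro y hy
    have h1 := hsolve y ((hchar y).mp hy)
    funext i p
    exact congrFun h1 (i, p)
  · intro β h
    exact hsolve β ((hchar β).mp h)
end

section
/- Let (Ω, F, P) be a probability space and N, d_y, d_z ≥ 1. Let γ_1, …, γ_N > 0, ρ_1, …, ρ_N > 0, w ∈ ℝᴺ, y ∈ ℝ^{d_y}, and let Z¹, …, Zᴺ : Ω → ℝ^{d_y×d_z} be random matrices with E[‖Zⁱ‖_F²] < ∞. Let 𝐞_i = e_i ⊗ I_{d_y}, ê_i = e_i ⊗ I_{d_z}, 𝐰 = [w¹ I_{d_y}; …; wᴺ I_{d_y}] ∈ ℝ^{N d_y × d_y}, and 𝐙 = [𝐞_1 Z¹, …, 𝐞_N Zᴺ] : Ω → ℝ^{N d_y × N d_z}. For each i let P_i ∈ ℝ^{N d_y × N d_y} be symmetric and S_i ∈ ℝ^{N d_y}, and for β ∈ ℝ^{N d_z} with blocks βⁱ = ê_iᵀ β define J_i(β; ŷ) = E[ ρ_i (‖y − 𝐰ᵀ(ŷ + 𝐙β)‖² + γ_i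 ‖βⁱ‖²) + (ŷ + 𝐙β)ᵀ P_i (ŷ + 𝐙β) + 2 S_iᵀ (ŷ + 𝐙β) ]. Set Â = E[𝐙ᵀ 𝐰 𝐰ᵀ 𝐙], D = E[𝐙], and D_i = E[𝐙ᵀ P_i 𝐙]. Fix any matrix G ∈ ℝ^{N d_z × N d_y} and vector H ∈ ℝ^{N d_z}, and define P'_i = Gᵀ (ρ_i Â + D_i + ρ_i γ_i ê_i ê_iᵀ) G + (ρ_i 𝐰 𝐰ᵀ + P_i) D G + Gᵀ Dᵀ (ρ_i 𝐰 𝐰ᵀ + P_i)ᵀ + ρ_i 𝐰 𝐰ᵀ + P_i and S'_i = Gᵀ (ρ_i Â + D_i + ρ_i γ_i ê_i ê_iᵀ) H + (ρ_i 𝐰 𝐰ᵀ + P_i) D H + Gᵀ Dᵀ (S_i − ρ_i 𝐰 y) + S_i − ρ_i 𝐰 y. Then there exists a real constant r_i (independent of ŷ) such that for every ŷ ∈ ℝ^{N d_y}: J_i(G ŷ + H; ŷ) = ŷᵀ P'_i ŷ + 2 S'_iᵀ ŷ + r_i. -/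
open MeasureTheory Matrix

set_option linter.unusedSectionVars false
namespace Helper
variable {n m k l : Type*} [Fintype n] [Fintype m] [Fintype k] [Fintype l]

lemma dot_shift (A : Matrix n m ℝ) (u : n → ℝ) (v : m → ℝ) :
    u ⬝ᵥ (A *ᵥ v) = (Aᵀ *ᵥ u) ⬝ᵥ v := by
  rw [Matrix.dotProduct_mulVec]
  congr 1
  rw [← Matrix.transpose_transpose A, Matrix.vecMul_transpose, Matrix.transpose_transpose]

lemma symm_dot {A : Matrix n n ℝ} (hA : Aᵀ = A) (u v : n → ℝ) :
    u ⬝ᵥ (A *ᵥ v) = v ⬝ᵥ (A *ᵥ u) := by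
  rw [dot_shift, hA, dotProduct_comm]

lemma quad_expand {A : Matrix n n ℝ} (hA : Aᵀ = A) (x : n → ℝ) (T : Matrix n m ℝ) (b : m → ℝ) :
    (x + T *ᵥ b) ⬝ᵥ (A *ᵥ (x + T *ᵥ b)) =
      x ⬝ᵥ (A *ᵥ x) + 2 * (x ⬝ᵥ ((A * T) *ᵥ b)) + b ⬝ᵥ ((Tᵀ * A * T) *ᵥ b) := by
  have h1 : (T *ᵥ b) ⬝ᵥ (A *ᵥ x) = x ⬝ᵥ ((A * T) *ᵥ b) := by
    rw [symm_dot hA, Matrix.mulVec_mulVec]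
  have h2 : (T *ᵥ b) ⬝ᵥ (A *ᵥ (T *ᵥ b)) = b ⬝ᵥ ((Tᵀ * A * T) *ᵥ b) := by
    have := (dot_shift Tᵀ b (A *ᵥ (T *ᵥ b))).symm
    rw [Matrix.transpose_transpose] at this
    rw [this, Matrix.mulVec_mulVec, Matrix.mulVec_mulVec]
  rw [Matrix.mulVec_add, add_dotProduct, dotProduct_add, dotProduct_add,
    h1, h2, Matrix.mulVec_mulVec]
  ring

lemma affine_quad {M : Matrix m m ℝ} (hM : Mᵀ = M) (G : Matrix m n ℝ) (H : m → ℝ) (x : n → ℝ) :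
    (G *ᵥ x + H) ⬝ᵥ (M *ᵥ (G *ᵥ x + H)) =
      x ⬝ᵥ ((Gᵀ * M * G) *ᵥ x) + 2 * (((Gᵀ * M) *ᵥ H) ⬝ᵥ x) + H ⬝ᵥ (M *ᵥ H) := by
  have h0 := quad_expand hM H G x  -- (H + G x) M (H + G x)
  have hc : (G *ᵥ x + H) = (H + G *ᵥ x) := by rw [add_comm]
  rw [hc, h0]
  have h3 : H ⬝ᵥ ((M * G) *ᵥ x) = ((Gᵀ * M) *ᵥ H) ⬝ᵥ x := by
    rw [dot_shift, Matrix.transpose_mul, hM]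
  rw [h3]; ring

end Helper

namespace OneStepAux
variable {Ω : Type*} [MeasurableSpace Ω] {P : Measure Ω}
variable {n m k : Type*} [Fintype n] [Fintype m] [Fintype k]

lemma int_mul_left (C : Matrix k n ℝ) {F : Ω → Matrix n m ℝ}
    (hF : ∀ a b, Integrable (fun ω => F ω a b) P) (a : k) (b : m) :
    Integrable (fun ω => (C * F ω) a b) P := by
  simp only [Matrix.mul_apply]
  exact integrable_finset_sum _ fun u _ => (hF u b).const_mul _

lemma int_mul_right (B : Matrix m k ℝ) {F : Ω → Matrix n m ℝ}
    (hF : ∀ a b, Integrable (fun ω => F ω a b) P) (a : n) (b : k) :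
    Integrable (fun ω => (F ω * B) a b) P := by
  simp only [Matrix.mul_apply]
  exact integrable_finset_sum _ fun u _ => (hF a u).mul_const _

lemma EM_mul_left (C : Matrix k n ℝ) {F : Ω → Matrix n m ℝ}
    (hF : ∀ a b, Integrable (fun ω => F ω a b) P) :
    (Matrix.of fun a b => ∫ ω, (C * F ω) a b ∂P)
      = C * (Matrix.of fun a b => ∫ ω, F ω a b ∂P) := by
  ext a b
  simp only [Matrix.mul_apply, Matrix.of_apply]
  rw [integral_finset_sum _ fun u _ => (hF u b).const_mul _]
  exact Finset.sum_congr rfl fun u _ => integral_const_mul _ _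

lemma EM_mul_right (B : Matrix m k ℝ) {F : Ω → Matrix n m ℝ}
    (hF : ∀ a b, Integrable (fun ω => F ω a b) P) :
    (Matrix.of fun a b => ∫ ω, (F ω * B) a b ∂P)
      = (Matrix.of fun a b => ∫ ω, F ω a b ∂P) * B := by
  ext a b
  simp only [Matrix.mul_apply, Matrix.of_apply]
  rw [integral_finset_sum _ fun u _ => (hF a u).mul_const _]
  exact Finset.sum_congr rfl fun u _ => integral_mul_const _ _

lemma int_mulVec {F : Ω → Matrix n m ℝ}
    (hF : ∀ a b, Integrable (fun ω => F ω a b) P) (v : m → ℝ) (a : n) :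
    Integrable (fun ω => (F ω *ᵥ v) a) P := by
  simp only [Matrix.mulVec, dotProduct]
  exact integrable_finset_sum _ fun b _ => (hF a b).mul_const _

lemma EV_mulVec {F : Ω → Matrix n m ℝ}
    (hF : ∀ a b, Integrable (fun ω => F ω a b) P) (v : m → ℝ) :
    (fun a => ∫ ω, (F ω *ᵥ v) a ∂P)
      = (Matrix.of fun a b => ∫ ω, F ω a b ∂P) *ᵥ v := by
  funext a
  simp only [Matrix.mulVec, dotProduct, Matrix.of_apply]
  rw [integral_finset_sum _ fun b _ => (hF a b).mul_const _]
  exact Finset.sum_congr rfl fun b _ => integral_mul_const _ _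

lemma int_dotmv {F : Ω → Matrix n m ℝ}
    (hF : ∀ a b, Integrable (fun ω => F ω a b) P) (u : n → ℝ) (v : m → ℝ) :
    Integrable (fun ω => u ⬝ᵥ (F ω *ᵥ v)) P := by
  simp only [dotProduct, Matrix.mulVec]
  refine integrable_finset_sum _ fun a _ => ?_
  have h : (fun ω => u a * ∑ b, F ω a b * v b) = fun ω => ∑ b, u a * (F ω a b * v b) := by
    funext ω; rw [Finset.mul_sum]
  rw [h]
  exact integrable_finset_sum _ fun b _ => ((hF a b).mul_const _).const_mul _

lemma integral_dotmv {F : Ω → Matrix n m ℝ}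
    (hF : ∀ a b, Integrable (fun ω => F ω a b) P) (u : n → ℝ) (v : m → ℝ) :
    ∫ ω, u ⬝ᵥ (F ω *ᵥ v) ∂P = u ⬝ᵥ ((Matrix.of fun a b => ∫ ω, F ω a b ∂P) *ᵥ v) := by
  simp only [dotProduct, Matrix.mulVec, Matrix.of_apply]
  have h : ∀ a, (fun ω => u a * ∑ b, F ω a b * v b) = fun ω => ∑ b, u a * (F ω a b * v b) := by
    intro a; funext ω; rw [Finset.mul_sum]
  rw [integral_finset_sum]
  · refine Finset.sum_congr rfl fun a _ => ?_
    rw [h a, integral_finset_sum _ fun b _ => ((hF a b).mul_const _).const_mul _]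
    rw [Finset.mul_sum]
    refine Finset.sum_congr rfl fun b _ => ?_
    rw [integral_const_mul, integral_mul_const]
  · intro a _
    rw [h a]
    exact integrable_finset_sum _ fun b _ => ((hF a b).mul_const _).const_mul _

lemma int_dot {L : Ω → n → ℝ} (hL : ∀ a, Integrable (fun ω => L ω a) P) (x : n → ℝ) :
    Integrable (fun ω => L ω ⬝ᵥ x) P := by
  simp only [dotProduct]
  exact integrable_finset_sum _ fun a _ => (hL a).mul_const _

lemma integral_dot {L : Ω → n → ℝ} (hL : ∀ a, Integrable (fun ω => L ω a) P) (x : n → ℝ) :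
    ∫ ω, L ω ⬝ᵥ x ∂P = (fun a => ∫ ω, L ω a ∂P) ⬝ᵥ x := by
  simp only [dotProduct]
  rw [integral_finset_sum _ fun a _ => (hL a).mul_const _]
  exact Finset.sum_congr rfl fun a _ => integral_mul_const _ _

lemma int_quadform {Q : Ω → Matrix n n ℝ}
    (hQ : ∀ a b, Integrable (fun ω => Q ω a b) P) (x : n → ℝ) :
    Integrable (fun ω => x ⬝ᵥ (Q ω *ᵥ x)) P := int_dotmv hQ x x

lemma int_sandwich (W : Matrix n n ℝ) {F : Ω → Matrix n m ℝ}
    (hFF : ∀ a b c d, Integrable (fun ω => F ω a b * F ω c d) P) (a b : m) :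
    Integrable (fun ω => ((F ω)ᵀ * W * F ω) a b) P := by
  simp only [Matrix.mul_apply, Matrix.transpose_apply]
  have h : (fun ω => ∑ v, (∑ u, F ω u a * W u v) * F ω v b)
      = fun ω => ∑ v, ∑ u, W u v * (F ω u a * F ω v b) := by
    funext ω
    refine Finset.sum_congr rfl fun v _ => ?_
    rw [Finset.sum_mul]
    exact Finset.sum_congr rfl fun u _ => by ring
  rw [h]
  exact integrable_finset_sum _ fun v _ =>
    integrable_finset_sum _ fun u _ => (hFF u a v b).const_mul _

lemma integral_add3 {f g h : Ω → ℝ} (hf : Integrable f P) (hg : Integrable g P)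
    (hh : Integrable h P) :
    ∫ ω, (f ω + g ω + h ω) ∂P = (∫ ω, f ω ∂P) + (∫ ω, g ω ∂P) + ∫ ω, h ω ∂P := by
  have h1 : Integrable (fun ω => f ω + g ω) P := hf.add hg
  rw [integral_add h1 hh, integral_add hf hg]

lemma integral_add4 {f g h k : Ω → ℝ} (hf : Integrable f P) (hg : Integrable g P)
    (hh : Integrable h P) (hk : Integrable k P) :
    ∫ ω, (f ω + g ω + h ω + k ω) ∂P
      = (∫ ω, f ω ∂P) + (∫ ω, g ω ∂P) + (∫ ω, h ω ∂P) + ∫ ω, k ω ∂P := by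
  have h1 : Integrable (fun ω => f ω + g ω + h ω) P := (hf.add hg).add hh
  rw [integral_add h1 hk, integral_add3 hf hg hh]

end OneStepAux

set_option maxHeartbeats 1000000 in
/-- **Matching of coefficients in the backward induction** for the feedback Nash
equilibrium: substituting an affine feedback strategy `β = Gŷ + H` into the one-step
cost `J_i(β; ŷ) = E[ρ_i(‖y − 𝐰ᵀ(ŷ + 𝐙β)‖² + γ_i‖βⁱ‖²) + (ŷ+𝐙β)ᵀP_i(ŷ+𝐙β) + 2S_iᵀ(ŷ+𝐙β)]`
yields again an affine-quadratic function of the state: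
`J_i(Gŷ + H; ŷ) = ŷᵀP'_iŷ + 2S'_iᵀŷ + r_i`, where `P'_i` and `S'_i` are the displayed
Riccati-type updates built from `Â = E[𝐙ᵀ𝐰𝐰ᵀ𝐙]`, `D = E[𝐙]` and `D_i = E[𝐙ᵀP_i𝐙]`. -/
theorem one_step_cost_affine_quadratic_in_state
    {Ω : Type*} [MeasurableSpace Ω] (P : Measure Ω) [IsProbabilityMeasure P]
    (N dy dz : ℕ) (hN : 1 ≤ N) (hdy : 1 ≤ dy) (hdz : 1 ≤ dz)
    (γ ρ : Fin N → ℝ) (hγ : ∀ i, 0 < γ i) (hρ : ∀ i, 0 < ρ i)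
    (w : Fin N → ℝ) (y : Fin dy → ℝ)
    (Z : Fin N → Ω → Matrix (Fin dy) (Fin dz) ℝ)
    (hZmeas : ∀ i k p, Measurable fun ω => Z i ω k p)
    (hZint : ∀ i, Integrable (fun ω => ∑ k, ∑ p, (Z i ω k p) ^ 2) P)
    (Pm : Fin N → Matrix (Fin N × Fin dy) (Fin N × Fin dy) ℝ)
    (hPm : ∀ i, (Pm i).IsSymm)
    (S : Fin N → (Fin N × Fin dy → ℝ))
    -- the embedding matrices ê_i = e_i ⊗ I_{d_z}
    (embz : Fin N → Matrix (Fin N × Fin dz) (Fin dz) ℝ)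
    (hembz : ∀ i, embz i =
      Matrix.of fun jp p' => if jp.1 = i ∧ jp.2 = p' then (1 : ℝ) else 0)
    -- 𝐰 = [w¹ I_{d_y}; …; wᴺ I_{d_y}]
    (bw : Matrix (Fin N × Fin dy) (Fin dy) ℝ)
    (hbw : bw = Matrix.of fun jk k' => if jk.2 = k' then w jk.1 else 0)
    -- 𝐙 = [𝐞_1 Z¹, …, 𝐞_N Zᴺ]
    (bZ : Ω → Matrix (Fin N × Fin dy) (Fin N × Fin dz) ℝ)
    (hbZ : ∀ ω, bZ ω =
      Matrix.of fun jk jp => if jk.1 = jp.1 then Z jk.1 ω jk.2 jp.2 else 0)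
    -- the cost functions J_i(β; ŷ)
    (J : (Fin N × Fin dz → ℝ) → (Fin N × Fin dy → ℝ) → Fin N → ℝ)
    (hJ : ∀ β yhat i, J β yhat i =
      ∫ ω,
        (ρ i * ((∑ k', (y k' - (bwᵀ *ᵥ (yhat + bZ ω *ᵥ β)) k') ^ 2) +
            γ i * ∑ p, (β (i, p)) ^ 2) +
          (yhat + bZ ω *ᵥ β) ⬝ᵥ (Pm i *ᵥ (yhat + bZ ω *ᵥ β)) +
          2 * (S i ⬝ᵥ (yhat + bZ ω *ᵥ β))) ∂P)
    -- Â = E[𝐙ᵀ𝐰𝐰ᵀ𝐙], D = E[𝐙], D_i = E[𝐙ᵀ P_i 𝐙]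
    (Ahat : Matrix (Fin N × Fin dz) (Fin N × Fin dz) ℝ)
    (hAhat : Ahat = Matrix.of fun ip jq =>
      ∫ ω, ((bZ ω)ᵀ * bw * bwᵀ * bZ ω) ip jq ∂P)
    (D : Matrix (Fin N × Fin dy) (Fin N × Fin dz) ℝ)
    (hD : D = Matrix.of fun jk jp => ∫ ω, bZ ω jk jp ∂P)
    (Di : Fin N → Matrix (Fin N × Fin dz) (Fin N × Fin dz) ℝ)
    (hDi : ∀ i, Di i = Matrix.of fun ip jq =>
      ∫ ω, ((bZ ω)ᵀ * Pm i * bZ ω) ip jq ∂P)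
    -- an arbitrary affine feedback strategy β = Gŷ + H
    (G : Matrix (Fin N × Fin dz) (Fin N × Fin dy) ℝ)
    (H : Fin N × Fin dz → ℝ)
    -- the Riccati-type updates
    (P' : Fin N → Matrix (Fin N × Fin dy) (Fin N × Fin dy) ℝ)
    (hP' : ∀ i, P' i =
      Gᵀ * (ρ i • Ahat + Di i + (ρ i * γ i) • (embz i * (embz i)ᵀ)) * G +
        (ρ i • (bw * bwᵀ) + Pm i) * D * G +
        Gᵀ * Dᵀ * (ρ i • (bw * bwᵀ) + Pm i)ᵀ +
        ρ i • (bw * bwᵀ) + Pm i)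
    (S' : Fin N → (Fin N × Fin dy → ℝ))
    (hS' : ∀ i, S' i =
      (Gᵀ * (ρ i • Ahat + Di i + (ρ i * γ i) • (embz i * (embz i)ᵀ))) *ᵥ H +
        ((ρ i • (bw * bwᵀ) + Pm i) * D) *ᵥ H +
        (Gᵀ * Dᵀ) *ᵥ (S i - ρ i • (bw *ᵥ y)) +
        (S i - ρ i • (bw *ᵥ y))) :
    ∀ i : Fin N, ∃ r : ℝ, ∀ yhat : Fin N × Fin dy → ℝ,
      J (G *ᵥ yhat + H) yhat i =
        yhat ⬝ᵥ (P' i *ᵥ yhat) + 2 * (S' i ⬝ᵥ yhat) + r := by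
  intro i
  open Helper OneStepAux in
  -- basic integrability facts
  have hZsq : ∀ j k p, Integrable (fun ω => (Z j ω k p) ^ 2) P := by
    intro j k p
    refine (hZint j).mono' ((hZmeas j k p).pow_const 2).aestronglyMeasurable ?_
    filter_upwards with ω
    rw [Real.norm_eq_abs, abs_of_nonneg (sq_nonneg _)]
    calc (Z j ω k p) ^ 2 ≤ ∑ p', (Z j ω k p') ^ 2 :=
          Finset.single_le_sum (f := fun p' => (Z j ω k p') ^ 2)
            (fun p' _ => sq_nonneg _) (Finset.mem_univ p)
      _ ≤ ∑ k', ∑ p', (Z j ω k' p') ^ 2 :=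
          Finset.single_le_sum (f := fun k' => ∑ p', (Z j ω k' p') ^ 2)
            (fun k' _ => Finset.sum_nonneg fun p' _ => sq_nonneg _) (Finset.mem_univ k)
  have hZ1 : ∀ j k p, Integrable (fun ω => Z j ω k p) P := by
    intro j k p
    refine (((hZsq j k p).add (integrable_const 1)).div_const 2).mono'
      (hZmeas j k p).aestronglyMeasurable ?_
    filter_upwards with ω
    simp only [Pi.add_apply]
    rw [Real.norm_eq_abs]
    nlinarith [sq_nonneg (|Z j ω k p| - 1), sq_abs (Z j ω k p), abs_nonneg (Z j ω k p)]
  have hZprod : ∀ j k p j' k' p', Integrable (fun ω => Z j ω k p * Z j' ω k' p') P := by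
    intro j k p j' k' p'
    refine (((hZsq j k p).add (hZsq j' k' p')).div_const 2).mono'
      ((hZmeas j k p).mul (hZmeas j' k' p')).aestronglyMeasurable ?_
    filter_upwards with ω
    simp only [Pi.add_apply]
    rw [Real.norm_eq_abs, abs_mul]
    nlinarith [sq_nonneg (|Z j ω k p| - |Z j' ω k' p'|), sq_abs (Z j ω k p),
      sq_abs (Z j' ω k' p'), abs_nonneg (Z j ω k p), abs_nonneg (Z j' ω k' p')]
  have hbZ1 : ∀ a b, Integrable (fun ω => bZ ω a b) P := by
    intro a b
    have h : (fun ω => bZ ω a b)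
        = fun ω => if a.1 = b.1 then Z a.1 ω a.2 b.2 else 0 := by
      funext ω; rw [hbZ ω]; rfl
    rw [h]
    split_ifs with hc
    · exact hZ1 _ _ _
    · exact integrable_zero _ _ _
  have hbZT : ∀ a b, Integrable (fun ω => (bZ ω)ᵀ a b) P := fun a b => hbZ1 b a
  have hbZprod : ∀ a b c d, Integrable (fun ω => bZ ω a b * bZ ω c d) P := by
    intro a b c d
    have h : (fun ω => bZ ω a b * bZ ω c d)
        = fun ω => (if a.1 = b.1 then Z a.1 ω a.2 b.2 else 0) *
            (if c.1 = d.1 then Z c.1 ω c.2 d.2 else 0) := by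
      funext ω; rw [hbZ ω]; rfl
    rw [h]
    split_ifs with h1 h2 h2
    · exact hZprod _ _ _ _ _ _
    · simpa using (integrable_zero Ω ℝ P)
    · simpa using (integrable_zero Ω ℝ P)
    · simpa using (integrable_zero Ω ℝ P)
  -- abbreviations
  have hPmeq : (Pm i)ᵀ = Pm i := hPm i
  set W : Matrix (Fin N × Fin dy) (Fin N × Fin dy) ℝ := bw * bwᵀ with hWdef
  have hWs : Wᵀ = W := by rw [hWdef, Matrix.transpose_mul, Matrix.transpose_transpose]
  set A' : Matrix (Fin N × Fin dy) (Fin N × Fin dy) ℝ := ρ i • W + Pm i with hA'def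
  set s : Fin N × Fin dy → ℝ := S i - ρ i • (bw *ᵥ y) with hsdef
  set E : Matrix (Fin N × Fin dz) (Fin N × Fin dz) ℝ := embz i * (embz i)ᵀ with hEdef
  set Mfun : Ω → Matrix (Fin N × Fin dz) (Fin N × Fin dz) ℝ :=
    fun ω => ρ i • ((bZ ω)ᵀ * bw * bwᵀ * bZ ω) + (bZ ω)ᵀ * Pm i * bZ ω + (ρ i * γ i) • E
    with hMdef
  have hMs : ∀ ω, (Mfun ω)ᵀ = Mfun ω := by
    intro ω
    rw [hMdef]
    simp only [Matrix.transpose_add, Matrix.transpose_smul, Matrix.transpose_mul,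
      Matrix.transpose_transpose, hPmeq, hEdef, Matrix.mul_assoc]
  set Qfun : Ω → Matrix (Fin N × Fin dy) (Fin N × Fin dy) ℝ :=
    fun ω => Gᵀ * Mfun ω * G + A' * bZ ω * G + (A' * bZ ω * G)ᵀ + A' with hQdef
  set Lfun : Ω → Fin N × Fin dy → ℝ :=
    fun ω => (Gᵀ * Mfun ω) *ᵥ H + (A' * bZ ω) *ᵥ H + (Gᵀ * (bZ ω)ᵀ) *ᵥ s + s with hLdef
  set cfun : Ω → ℝ :=
    fun ω => H ⬝ᵥ (Mfun ω *ᵥ H) + 2 * (s ⬝ᵥ (bZ ω *ᵥ H)) + ρ i * (y ⬝ᵥ y) with hcdef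
  -- sum-of-squares expansion
  have hsum : ∀ v : Fin N × Fin dy → ℝ,
      ∑ k', (y k' - (bwᵀ *ᵥ v) k') ^ 2
        = y ⬝ᵥ y - 2 * ((bw *ᵥ y) ⬝ᵥ v) + v ⬝ᵥ (W *ᵥ v) := by
    intro v
    have h1 : (bw *ᵥ y) ⬝ᵥ v = y ⬝ᵥ (bwᵀ *ᵥ v) := by
      rw [Helper.dot_shift bwᵀ y v, Matrix.transpose_transpose]
    have h2 : v ⬝ᵥ (W *ᵥ v) = (bwᵀ *ᵥ v) ⬝ᵥ (bwᵀ *ᵥ v) := by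
      rw [hWdef, ← Matrix.mulVec_mulVec, Helper.dot_shift]
    rw [h1, h2]
    simp only [dotProduct, Finset.mul_sum, ← Finset.sum_sub_distrib,
      ← Finset.sum_add_distrib]
    exact Finset.sum_congr rfl fun k' _ => by ring
  -- embedded strategy block
  have hemb : ∀ β : Fin N × Fin dz → ℝ,
      ∑ p, (β (i, p)) ^ 2 = β ⬝ᵥ (E *ᵥ β) := by
    intro β
    have h1 : (embz i)ᵀ *ᵥ β = fun p => β (i, p) := by
      funext p
      simp only [Matrix.mulVec, dotProduct, Matrix.transpose_apply, hembz i,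
        Matrix.of_apply, ite_mul, one_mul, zero_mul]
      rw [Finset.sum_eq_single ((i, p) : Fin N × Fin dz)]
      · simp
      · intro b _ hb
        rw [if_neg]
        intro hc
        exact hb (Prod.ext hc.1 hc.2)
      · intro hmem
        exact absurd (Finset.mem_univ _) hmem
    have h2 : β ⬝ᵥ (E *ᵥ β) = ((embz i)ᵀ *ᵥ β) ⬝ᵥ ((embz i)ᵀ *ᵥ β) := by
      rw [hEdef, ← Matrix.mulVec_mulVec, Helper.dot_shift]
    rw [h2, h1]
    simp only [dotProduct]
    exact Finset.sum_congr rfl fun p _ => by ring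
  -- Stage 1: expansion in terms of a generic strategy b
  have stage1 : ∀ (ω : Ω) (b : Fin N × Fin dz → ℝ) (t : Fin N × Fin dy → ℝ),
      ρ i * ((∑ k', (y k' - (bwᵀ *ᵥ (t + bZ ω *ᵥ b)) k') ^ 2) + γ i * ∑ p, (b (i, p)) ^ 2) +
        (t + bZ ω *ᵥ b) ⬝ᵥ (Pm i *ᵥ (t + bZ ω *ᵥ b)) + 2 * (S i ⬝ᵥ (t + bZ ω *ᵥ b))
      = t ⬝ᵥ (A' *ᵥ t) + 2 * (t ⬝ᵥ ((A' * bZ ω) *ᵥ b)) + b ⬝ᵥ (Mfun ω *ᵥ b)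
        + 2 * (s ⬝ᵥ t) + 2 * (s ⬝ᵥ (bZ ω *ᵥ b)) + ρ i * (y ⬝ᵥ y) := by
    intro ω b t
    rw [hsum, hemb, Helper.quad_expand hWs t (bZ ω) b, Helper.quad_expand hPmeq t (bZ ω) b]
    simp only [hMdef, hA'def, hsdef, hWdef, Matrix.add_mulVec, Matrix.smul_mulVec,
      dotProduct_add, add_dotProduct, dotProduct_smul,
      smul_dotProduct, sub_dotProduct, dotProduct_sub,
      Matrix.smul_mul, Matrix.add_mul, Matrix.mul_add, Matrix.mul_smul,
      Matrix.mul_assoc, smul_eq_mul]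
    ring
  -- the key pointwise identity
  have key : ∀ (ω : Ω) (t : Fin N × Fin dy → ℝ),
      ρ i * ((∑ k', (y k' - (bwᵀ *ᵥ (t + bZ ω *ᵥ (G *ᵥ t + H))) k') ^ 2) +
          γ i * ∑ p, ((G *ᵥ t + H) (i, p)) ^ 2) +
        (t + bZ ω *ᵥ (G *ᵥ t + H)) ⬝ᵥ (Pm i *ᵥ (t + bZ ω *ᵥ (G *ᵥ t + H))) +
        2 * (S i ⬝ᵥ (t + bZ ω *ᵥ (G *ᵥ t + H)))
      = t ⬝ᵥ (Qfun ω *ᵥ t) + 2 * (Lfun ω ⬝ᵥ t) + cfun ω := by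
    intro ω t
    rw [stage1 ω (G *ᵥ t + H) t]
    rw [Helper.affine_quad (hMs ω) G H t]
    have e1 : t ⬝ᵥ ((A' * bZ ω) *ᵥ (G *ᵥ t + H))
        = t ⬝ᵥ ((A' * bZ ω * G) *ᵥ t) + ((A' * bZ ω) *ᵥ H) ⬝ᵥ t := by
      rw [Matrix.mulVec_add, dotProduct_add, Matrix.mulVec_mulVec,
        dotProduct_comm _ ((A' * bZ ω) *ᵥ H)]
    have e2 : s ⬝ᵥ (bZ ω *ᵥ (G *ᵥ t + H))
        = ((Gᵀ * (bZ ω)ᵀ) *ᵥ s) ⬝ᵥ t + s ⬝ᵥ (bZ ω *ᵥ H) := by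
      rw [Matrix.mulVec_add, dotProduct_add, Matrix.mulVec_mulVec,
        Helper.dot_shift (bZ ω * G) s t, Matrix.transpose_mul]
    have e3 : t ⬝ᵥ ((A' * bZ ω * G)ᵀ *ᵥ t) = t ⬝ᵥ ((A' * bZ ω * G) *ᵥ t) := by
      rw [Helper.dot_shift, Matrix.transpose_transpose, dotProduct_comm]
    rw [e1, e2]
    rw [hQdef, hLdef, hcdef]
    simp only [Matrix.add_mulVec, dotProduct_add, add_dotProduct, Pi.add_apply,
      e3]
    ring
  -- integrability of the coefficient functions
  have hassoc : ∀ ω, (bZ ω)ᵀ * bw * bwᵀ * bZ ω = (bZ ω)ᵀ * W * bZ ω := by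
    intro ω; rw [hWdef, Matrix.mul_assoc ((bZ ω)ᵀ) bw bwᵀ]
  have hXint : ∀ a b, Integrable (fun ω => ((bZ ω)ᵀ * bw * bwᵀ * bZ ω) a b) P := by
    intro a b
    simp only [hassoc]
    exact OneStepAux.int_sandwich W (fun a b c d => hbZprod a b c d) a b
  have hYint : ∀ a b, Integrable (fun ω => ((bZ ω)ᵀ * Pm i * bZ ω) a b) P :=
    fun a b => OneStepAux.int_sandwich (Pm i) (fun a b c d => hbZprod a b c d) a b
  have hMint : ∀ a b, Integrable (fun ω => Mfun ω a b) P := by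
    intro a b
    simp only [hMdef, Matrix.add_apply, Matrix.smul_apply, smul_eq_mul]
    exact (((hXint a b).const_mul _).add (hYint a b)).add (integrable_const _)
  have hQint : ∀ a b, Integrable (fun ω => Qfun ω a b) P := by
    intro a b
    simp only [hQdef, Matrix.add_apply, Matrix.transpose_apply]
    exact (((OneStepAux.int_mul_right G (OneStepAux.int_mul_left Gᵀ hMint) a b).add
      (OneStepAux.int_mul_right G (OneStepAux.int_mul_left A' hbZ1) a b)).add
      (OneStepAux.int_mul_right G (OneStepAux.int_mul_left A' hbZ1) b a)).add
      (integrable_const _)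
  have hLint : ∀ a, Integrable (fun ω => Lfun ω a) P := by
    intro a
    simp only [hLdef, Pi.add_apply]
    exact (((OneStepAux.int_mulVec (OneStepAux.int_mul_left Gᵀ hMint) H a).add
      (OneStepAux.int_mulVec (OneStepAux.int_mul_left A' hbZ1) H a)).add
      (OneStepAux.int_mulVec (OneStepAux.int_mul_left Gᵀ hbZT) s a)).add
      (integrable_const _)
  have hcint : Integrable cfun P := by
    simp only [hcdef]
    exact ((OneStepAux.int_dotmv hMint H H).add
      ((OneStepAux.int_dotmv hbZ1 s H).const_mul 2)).add (integrable_const _)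
  -- expectation matrices
  have hMbar : (Matrix.of fun a b => ∫ ω, Mfun ω a b ∂P)
      = ρ i • Ahat + Di i + (ρ i * γ i) • E := by
    ext a b
    simp only [hMdef, Matrix.add_apply, Matrix.smul_apply, smul_eq_mul, Matrix.of_apply]
    rw [OneStepAux.integral_add3 ((hXint a b).const_mul _) (hYint a b) (integrable_const _),
      integral_const_mul, integral_const]
    simp [hAhat, hDi i]
  have hDbar : (Matrix.of fun a b => ∫ ω, bZ ω a b ∂P) = D := by
    ext a b; rw [hD]
  have hDTbar : (Matrix.of fun a b => ∫ ω, (bZ ω)ᵀ a b ∂P) = Dᵀ := by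
    ext a b
    simp only [Matrix.of_apply, Matrix.transpose_apply, hD]
  have hQbar : (Matrix.of fun a b => ∫ ω, Qfun ω a b ∂P) = P' i := by
    have t1 : (Matrix.of fun a b => ∫ ω, (Gᵀ * Mfun ω * G) a b ∂P)
        = Gᵀ * (ρ i • Ahat + Di i + (ρ i * γ i) • E) * G := by
      rw [OneStepAux.EM_mul_right G (OneStepAux.int_mul_left Gᵀ hMint),
        OneStepAux.EM_mul_left Gᵀ hMint, hMbar]
    have t2 : (Matrix.of fun a b => ∫ ω, (A' * bZ ω * G) a b ∂P) = A' * D * G := by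
      rw [OneStepAux.EM_mul_right G (OneStepAux.int_mul_left A' hbZ1),
        OneStepAux.EM_mul_left A' hbZ1, hDbar]
    ext a b
    simp only [hQdef, Matrix.add_apply, Matrix.transpose_apply, Matrix.of_apply]
    rw [OneStepAux.integral_add4 (OneStepAux.int_mul_right G (OneStepAux.int_mul_left Gᵀ hMint) a b)
        (OneStepAux.int_mul_right G (OneStepAux.int_mul_left A' hbZ1) a b)
        (OneStepAux.int_mul_right G (OneStepAux.int_mul_left A' hbZ1) b a)
        (integrable_const _),
      integral_const]
    have e1 : ∫ ω, (Gᵀ * Mfun ω * G) a b ∂P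
        = (Gᵀ * (ρ i • Ahat + Di i + (ρ i * γ i) • E) * G) a b := by
      rw [← t1]; rfl
    have e2 : ∫ ω, (A' * bZ ω * G) a b ∂P = (A' * D * G) a b := by rw [← t2]; rfl
    have e3 : ∫ ω, (A' * bZ ω * G) b a ∂P = (A' * D * G) b a := by rw [← t2]; rfl
    rw [e1, e2, e3, hP' i]
    have e4 : (A' * D * G) b a = (Gᵀ * Dᵀ * A'ᵀ) a b := by
      rw [show Gᵀ * Dᵀ * A'ᵀ = (A' * (D * G))ᵀ by
        rw [Matrix.transpose_mul, Matrix.transpose_mul, Matrix.mul_assoc],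
        Matrix.transpose_apply, Matrix.mul_assoc]
    rw [e4]
    simp only [hA'def, Matrix.add_apply, Matrix.smul_apply, smul_eq_mul, measure_univ,
      ENNReal.toReal_one, one_smul, probReal_univ, hEdef]
    ring
  have hLbar : (fun a => ∫ ω, Lfun ω a ∂P) = S' i := by
    have t1 : (fun a => ∫ ω, ((Gᵀ * Mfun ω) *ᵥ H) a ∂P)
        = (Gᵀ * (ρ i • Ahat + Di i + (ρ i * γ i) • E)) *ᵥ H := by
      rw [OneStepAux.EV_mulVec (OneStepAux.int_mul_left Gᵀ hMint) H,
        OneStepAux.EM_mul_left Gᵀ hMint, hMbar]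
    have t2 : (fun a => ∫ ω, ((A' * bZ ω) *ᵥ H) a ∂P) = (A' * D) *ᵥ H := by
      rw [OneStepAux.EV_mulVec (OneStepAux.int_mul_left A' hbZ1) H,
        OneStepAux.EM_mul_left A' hbZ1, hDbar]
    have t3 : (fun a => ∫ ω, ((Gᵀ * (bZ ω)ᵀ) *ᵥ s) a ∂P) = (Gᵀ * Dᵀ) *ᵥ s := by
      rw [OneStepAux.EV_mulVec (OneStepAux.int_mul_left Gᵀ hbZT) s,
        OneStepAux.EM_mul_left Gᵀ hbZT, hDTbar]
    funext a
    simp only [hLdef, Pi.add_apply]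
    rw [OneStepAux.integral_add4 (OneStepAux.int_mulVec (OneStepAux.int_mul_left Gᵀ hMint) H a)
        (OneStepAux.int_mulVec (OneStepAux.int_mul_left A' hbZ1) H a)
        (OneStepAux.int_mulVec (OneStepAux.int_mul_left Gᵀ hbZT) s a)
        (integrable_const _),
      integral_const]
    have e1 := congrFun t1 a
    have e2 := congrFun t2 a
    have e3 := congrFun t3 a
    rw [e1, e2, e3, hS' i]
    simp only [Pi.add_apply, measure_univ, ENNReal.toReal_one, one_smul, hsdef, hA'def, probReal_univ, hEdef]
  -- assemble
  refine ⟨∫ ω, cfun ω ∂P, fun yhat => ?_⟩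
  rw [hJ]
  have hcongr : ∫ ω, (ρ i * ((∑ k', (y k' - (bwᵀ *ᵥ (yhat + bZ ω *ᵥ (G *ᵥ yhat + H))) k') ^ 2) +
          γ i * ∑ p, ((G *ᵥ yhat + H) (i, p)) ^ 2) +
        (yhat + bZ ω *ᵥ (G *ᵥ yhat + H)) ⬝ᵥ (Pm i *ᵥ (yhat + bZ ω *ᵥ (G *ᵥ yhat + H))) +
        2 * (S i ⬝ᵥ (yhat + bZ ω *ᵥ (G *ᵥ yhat + H)))) ∂P
      = ∫ ω, (yhat ⬝ᵥ (Qfun ω *ᵥ yhat) + 2 * (Lfun ω ⬝ᵥ yhat) + cfun ω) ∂P :=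
    integral_congr_ae (Filter.Eventually.of_forall fun ω => key ω yhat)
  rw [hcongr]
  have intq : Integrable (fun ω => yhat ⬝ᵥ (Qfun ω *ᵥ yhat)) P :=
    OneStepAux.int_dotmv hQint yhat yhat
  have intl : Integrable (fun ω => 2 * (Lfun ω ⬝ᵥ yhat)) P :=
    (OneStepAux.int_dot hLint yhat).const_mul 2
  rw [OneStepAux.integral_add3 intq intl hcint,
    OneStepAux.integral_dotmv hQint yhat yhat, integral_const_mul,
    OneStepAux.integral_dot hLint yhat, hQbar, hLbar]
end
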